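/- Let p be an odd prime, G ≅ Z_p³ with generators x, y, z, α the automorphism sending (x,y,z) to (xy, yz, z), and S = {x^{α^i}, y^{α^i} : i ∈ ℤ}. Then |S| = 2p, and the induced subdigraph of Cay(G,S) on S has exactly 2p arcs, namely (x^{α^i}, x^{α^{i+1}}) and (y^{α^i}, x^{α^{i+1}}) for i ∈ Z_p. -/

import Mathlib

/-- The automorphism group of a digraph given by an adjacency relation. -/
def dAut {V : Type*} (adj : V → V → Prop) : Subgroup (Equiv.Perm V) where
  carrier := {σ | ∀ u v : V, adj (σ u) (σ v) ↔ adj u v}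
  one_mem' := by intro u v; rfl
  mul_mem' := by
    intro a b ha hb u v
    simp only [Set.mem_setOf_eq] at *
    rw [Equiv.Perm.mul_apply, Equiv.Perm.mul_apply, ha, hb]
  inv_mem' := by
    intro a ha u v
    simpa using (ha (a⁻¹ u) (a⁻¹ v)).symm

/-- Adjacency of the Cayley digraph `Cay(G,S)`. -/
def cayAdj (G : Type*) [Group G] (S : Set G) : G → G → Prop :=
  fun u v => v * u⁻¹ ∈ S

/-- The right regular representation of `G` in `Equiv.Perm G`. -/
def rightReg (G : Type*) [Group G] : G →* Equiv.Perm G where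
  toFun g := Equiv.mulRight g⁻¹
  map_one' := by ext x; simp
  map_mul' := by intro a b; ext x; simp [mul_assoc]

/-- The right regular representation of `G` as a subgroup of `Aut(Cay(G,S))`. -/
def cayleyRR (G : Type*) [Group G] (S : Set G) :
    Subgroup (dAut (cayAdj G S)) :=
  ((rightReg G).range).subgroupOf (dAut (cayAdj G S))

/-- A subgroup of `Equiv.Perm V` is regular if it is sharply transitive on `V`. -/
def IsRegularSub {V : Type*} (H : Subgroup (Equiv.Perm V)) : Prop :=
  ∀ v w : V, ∃! h : H, (h : Equiv.Perm V) v = w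

/-- Adjacency of the cartesian product of two digraphs. -/
def cartAdj {α β : Type*} (adjG : α → α → Prop) (adjD : β → β → Prop) :
    α × β → α × β → Prop :=
  fun u v => (u.1 = v.1 ∧ adjD u.2 v.2) ∨ (u.2 = v.2 ∧ adjG u.1 v.1)

/-- `pathLe adj i u v` : there is a directed path of length at most `i` from `u` to `v`. -/
def pathLe {V : Type*} (adj : V → V → Prop) : ℕ → V → V → Prop
  | 0, u, v => u = v
  | (n+1), u, v => pathLe adj n u v ∨ ∃ w, pathLe adj n u w ∧ adj w v

/-- For `G ≅ Z_p³` and `α : (x,y,z) ↦ (xy, yz, z)`, the connection set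
`S = {x^{α^i}, y^{α^i} : i ∈ ℤ}` has `2p` elements, and the induced subdigraph of
`Cay(G,S)` on `S` has exactly the `2p` arcs `(x^{α^i}, x^{α^{i+1}})` and
`(y^{α^i}, x^{α^{i+1}})`. -/
theorem stmt_9 {G : Type*} [CommGroup G] [Fintype G] (p : ℕ) (hp : p.Prime)
    (hodd : Odd p) (hcard : Nat.card G = p ^ 3) (hexp : ∀ g : G, g ^ p = 1)
    (x y z : G) (hgen : Subgroup.closure {x, y, z} = ⊤)
    (α : G ≃* G) (hx : α x = x * y) (hy : α y = y * z) (hz : α z = z)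
    (S : Set G) (hS : S = {g | ∃ i : ℤ, g = (α ^ i) x ∨ g = (α ^ i) y}) :
    S.ncard = 2 * p ∧
    {q : G × G | q.1 ∈ S ∧ q.2 ∈ S ∧ cayAdj G S q.1 q.2}.ncard = 2 * p ∧
    (∀ u ∈ S, ∀ v ∈ S, (cayAdj G S u v ↔
      ∃ i : ℤ, (u = (α ^ i) x ∨ u = (α ^ i) y) ∧ v = (α ^ (i + 1)) x)) := by
  haveI : NeZero p := ⟨hp.pos.ne'⟩
  haveI : Fact (1 < p) := ⟨hp.one_lt⟩
  haveI : Fact p.Prime := ⟨hp⟩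
  have h2le := hp.two_le
  have hodd' := hodd
  rw [Nat.odd_iff] at hodd'
  -- 2 ≠ 0 in ZMod p
  have h2ne : (2 : ZMod p) ≠ 0 := by
    intro h
    have h' : ((2:ℕ) : ZMod p) = 0 := by exact_mod_cast h
    have hd : p ∣ 2 := (ZMod.natCast_eq_zero_iff 2 p).mp h'
    have := Nat.le_of_dvd (by norm_num) hd
    omega
  -- binomial coefficient arithmetic
  have h2dvd : ∀ i : ℤ, (2:ℤ) ∣ i * (i - 1) := by
    intro i
    obtain ⟨k, hk⟩ := Int.even_mul_succ_self (i - 1)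
    exact ⟨k, by rw [show i*(i-1) = (i-1)*(i-1+1) from by ring, hk]; ring⟩
  have hcstep : ∀ i : ℤ, (i+1)*(i+1-1)/2 = i*(i-1)/2 + i := by
    intro i
    rw [show (i+1)*(i+1-1) = i*(i-1) + i*2 from by ring,
      Int.add_mul_ediv_right _ _ (by norm_num : (2:ℤ) ≠ 0)]
  have hcstep2 : ∀ j : ℤ, (j-1)*(j-1-1)/2 = j*(j-1)/2 - (j-1) := by
    intro j
    have h := hcstep (j-1)
    rw [show j-1+1 = j from by ring] at h
    linarith
  -- zpow reduces mod p
  have hzpow : ∀ (g : G) (i : ℤ), g ^ i = g ^ ((i : ZMod p)).val := by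
    intro g i
    have h2 : g ^ i = g ^ (i % (p:ℤ)) := by
      conv_lhs => rw [← Int.mul_ediv_add_emod i (p:ℤ)]
      rw [zpow_add, zpow_mul, zpow_natCast, hexp, one_zpow, one_mul]
    have h1 : (((i : ZMod p)).val : ℤ) = i % p := ZMod.val_intCast i
    rw [h2, ← h1, zpow_natCast]
  have hnpow : ∀ (g : G) (m n : ℕ), (m : ZMod p) = n → g ^ m = g ^ n := by
    intro g m n h
    rw [ZMod.natCast_eq_natCast_iff] at h
    have hm : ∀ k : ℕ, g ^ k = g ^ (k % p) := by
      intro k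
      conv_lhs => rw [← Nat.div_add_mod k p]
      rw [pow_add, pow_mul, hexp, one_pow, one_mul]
    rw [hm m, hm n, h]
  -- the representation map and its bijectivity
  have hfadd : ∀ s t : ZMod p × ZMod p × ZMod p,
      (x ^ s.1.val * y ^ s.2.1.val * z ^ s.2.2.val) *
      (x ^ t.1.val * y ^ t.2.1.val * z ^ t.2.2.val) =
      x ^ (s.1+t.1).val * y ^ (s.2.1+t.2.1).val * z ^ (s.2.2+t.2.2).val := by
    intro s t
    rw [hnpow x ((s.1+t.1).val) (s.1.val + t.1.val) (by push_cast; simp),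
      hnpow y ((s.2.1+t.2.1).val) (s.2.1.val + t.2.1.val) (by push_cast; simp),
      hnpow z ((s.2.2+t.2.2).val) (s.2.2.val + t.2.2.val) (by push_cast; simp),
      pow_add, pow_add, pow_add]
    simp [mul_comm, mul_left_comm, mul_assoc]
  have hsurj : Function.Surjective
      (fun t : ZMod p × ZMod p × ZMod p => x ^ t.1.val * y ^ t.2.1.val * z ^ t.2.2.val) := by
    intro g
    have hg : g ∈ Subgroup.closure ({x, y, z} : Set G) := by
      rw [hgen]; exact Subgroup.mem_top g
    induction hg using Subgroup.closure_induction with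
    | mem w hw =>
      simp only [Set.mem_insert_iff, Set.mem_singleton_iff] at hw
      rcases hw with rfl|rfl|rfl
      · exact ⟨(1,0,0), by simp [ZMod.val_one, ZMod.val_zero]⟩
      · exact ⟨(0,1,0), by simp [ZMod.val_one, ZMod.val_zero]⟩
      · exact ⟨(0,0,1), by simp [ZMod.val_one, ZMod.val_zero]⟩
    | one => exact ⟨(0,0,0), by simp [ZMod.val_zero]⟩
    | mul a b ha hb iha ihb =>
      obtain ⟨s, hs⟩ := iha
      obtain ⟨t, ht⟩ := ihb
      refine ⟨s + t, ?_⟩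
      simp only [Prod.fst_add, Prod.snd_add] at *
      rw [← hfadd s t, hs, ht]
    | inv a ha iha =>
      obtain ⟨t, ht⟩ := iha
      refine ⟨-t, ?_⟩
      simp only at ht ⊢
      rw [← ht]
      refine eq_inv_of_mul_eq_one_left ?_
      rw [hfadd (-t) t]
      simp [ZMod.val_zero, Prod.fst_neg, Prod.snd_neg]
  have hcards : Fintype.card (ZMod p × ZMod p × ZMod p) = Fintype.card G := by
    rw [Fintype.card_prod, Fintype.card_prod, ZMod.card, ← Nat.card_eq_fintype_card, hcard]
    ring
  have hfinj : Function.Injective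
      (fun t : ZMod p × ZMod p × ZMod p => x ^ t.1.val * y ^ t.2.1.val * z ^ t.2.2.val) :=
    ((Fintype.bijective_iff_surjective_and_card _).mpr ⟨hsurj, hcards⟩).injective
  -- the key normal-form injectivity lemma
  have hkey : ∀ a b c a' b' c' : ℤ, (x^a * y^b * z^c = x^a' * y^b' * z^c' ↔
      ((a : ZMod p) = (a' : ZMod p) ∧ (b : ZMod p) = (b' : ZMod p) ∧
        (c : ZMod p) = (c' : ZMod p))) := by
    intro a b c a' b' c'
    constructor
    · intro h
      rw [hzpow x a, hzpow y b, hzpow z c, hzpow x a', hzpow y b', hzpow z c'] at h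
      have h9 := @hfinj ((a:ZMod p),(b:ZMod p),(c:ZMod p)) ((a':ZMod p),(b':ZMod p),(c':ZMod p)) h
      rw [Prod.mk.injEq, Prod.mk.injEq] at h9
      exact ⟨h9.1, h9.2.1, h9.2.2⟩
    · rintro ⟨h1, h2, h3⟩
      rw [hzpow x a, hzpow y b, hzpow z c, hzpow x a', hzpow y b', hzpow z c', h1, h2, h3]
  -- step lemmas for automorphism powers
  have hstepup : ∀ (j : ℤ) (g : G), (α ^ (j+1)) g = (α ^ j) (α g) := by
    intro j g; rw [zpow_add_one]; rfl
  have hstepdown : ∀ (j : ℤ) (g : G), (α ^ (j - 1)) (α g) = (α ^ j) g := by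
    intro j g
    conv_rhs => rw [show j = j-1+1 from by ring]
    rw [zpow_add_one]; rfl
  have hzfix : ∀ i : ℤ, (α ^ i) z = z := by
    intro i
    induction i using Int.induction_on with
    | zero => simp
    | succ i ih => rw [hstepup, hz, ih]
    | pred i ih =>
      have : (α ^ (-(i:ℤ) - 1)) z = (α ^ (-(i:ℤ) - 1)) (α z) := by rw [hz]
      rw [this, hstepdown, ih]
  have hTz : ∀ a b c : ℤ, x^a*y^b*z^c*z = x^a*y^b*z^(c+1) := by
    intro a b c; rw [mul_assoc, ← zpow_add_one]
  have hTmul : ∀ a b c a' b' c' : ℤ,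
      (x^a*y^b*z^c) * (x^a'*y^b'*z^c') = x^(a+a') * y^(b+b') * z^(c+c') := by
    intros; simp [zpow_add, mul_comm, mul_left_comm, mul_assoc]
  have hTmulinv : ∀ a b c a' b' c' : ℤ,
      (x^a*y^b*z^c) * (x^a'*y^b'*z^c')⁻¹ = x^(a-a') * y^(b-b') * z^(c-c') := by
    intros; simp [zpow_sub, mul_comm, mul_left_comm, mul_assoc]
  -- formulas for α^i y and α^i x
  have hY : ∀ i : ℤ, (α ^ i) y = x^(0:ℤ) * y^(1:ℤ) * z^i := by
    intro i
    induction i using Int.induction_on with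
    | zero => simp
    | succ i ih =>
      rw [hstepup, hy, map_mul, ih, hzfix, hTz]
    | pred i ih =>
      have hyinv : α (y * z⁻¹) = y := by
        rw [map_mul, map_inv, hy, hz, mul_inv_cancel_right]
      calc (α ^ (-(i:ℤ) - 1)) y = (α ^ (-(i:ℤ) - 1)) (α (y * z⁻¹)) := by rw [hyinv]
        _ = (α ^ (-(i:ℤ))) (y * z⁻¹) := hstepdown _ _
        _ = (α ^ (-(i:ℤ))) y * ((α ^ (-(i:ℤ))) z)⁻¹ := by rw [map_mul, map_inv]
        _ = x^(0:ℤ) * y^(1:ℤ) * z^(-(i:ℤ)) * z⁻¹ := by rw [ih, hzfix]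
        _ = x^(0:ℤ) * y^(1:ℤ) * z^(-(i:ℤ) - 1) := by rw [mul_assoc, ← zpow_sub_one]
  have hX : ∀ i : ℤ, (α ^ i) x = x^(1:ℤ) * y^i * z^(i*(i-1)/2) := by
    intro i
    induction i using Int.induction_on with
    | zero => norm_num
    | succ i ih =>
      rw [hstepup, hx, map_mul, ih, hY, hTmul,
        show ((1:ℤ)+0) = 1 from by norm_num,
        show ((i:ℤ)*((i:ℤ)-1)/2 + (i:ℤ)) = ((i:ℤ)+1)*((i:ℤ)+1-1)/2 from (hcstep (i:ℤ)).symm]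
    | pred i ih =>
      have hxinv : α (x * y⁻¹ * z) = x := by
        rw [map_mul, map_mul, map_inv, hx, hy, hz]
        simp [mul_comm, mul_left_comm, mul_assoc]
      calc (α ^ (-(i:ℤ) - 1)) x = (α ^ (-(i:ℤ) - 1)) (α (x * y⁻¹ * z)) := by rw [hxinv]
        _ = (α ^ (-(i:ℤ))) (x * y⁻¹ * z) := hstepdown _ _
        _ = (α ^ (-(i:ℤ))) x * ((α ^ (-(i:ℤ))) y)⁻¹ * (α ^ (-(i:ℤ))) z := by
            rw [map_mul, map_mul, map_inv]
        _ = x^(1:ℤ) * y^(-(i:ℤ)) * z^((-(i:ℤ))*(-(i:ℤ)-1)/2) *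
              (x^(0:ℤ) * y^(1:ℤ) * z^(-(i:ℤ)))⁻¹ * z := by rw [ih, hY, hzfix]
        _ = x^((1:ℤ)-0) * y^(-(i:ℤ)-1) * z^((-(i:ℤ))*(-(i:ℤ)-1)/2 - -(i:ℤ)) * z := by
            rw [hTmulinv]
        _ = x^((1:ℤ)-0) * y^(-(i:ℤ)-1) * z^((-(i:ℤ))*(-(i:ℤ)-1)/2 - -(i:ℤ) + 1) := hTz _ _ _
        _ = x^(1:ℤ) * y^(-(i:ℤ)-1) * z^((-(i:ℤ)-1)*(-(i:ℤ)-1-1)/2) := by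
            rw [show ((1:ℤ)-0) = 1 from by norm_num,
              show (-(i:ℤ))*(-(i:ℤ)-1)/2 - -(i:ℤ) + 1 = (-(i:ℤ)-1)*(-(i:ℤ)-1-1)/2 from
                by linarith [hcstep2 (-(i:ℤ))]]
  -- α has order dividing p
  have hXp : (α ^ ((p:ℕ):ℤ)) x = x := by
    rw [hX, zpow_one]
    have h1 : y ^ (((p:ℕ):ℤ)) = 1 := by rw [zpow_natCast, hexp]
    have h2 : z ^ (((p:ℕ):ℤ)*(((p:ℕ):ℤ)-1)/2) = 1 := by
      have hdd : (2:ℤ) ∣ (((p:ℕ):ℤ)-1) := by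
        obtain ⟨k, hk⟩ := hodd
        exact ⟨(k:ℤ), by push_cast [hk]; ring⟩
      rw [Int.mul_ediv_assoc _ hdd, zpow_mul, zpow_natCast, hexp, one_zpow]
    rw [h1, h2, mul_one, mul_one]
  have hYp : (α ^ ((p:ℕ):ℤ)) y = y := by
    rw [hY, zpow_zero, zpow_one, one_mul, zpow_natCast, hexp, mul_one]
  have hα1 : α ^ ((p:ℕ):ℤ) = 1 := by
    have hle : Subgroup.closure ({x,y,z} : Set G) ≤
        MonoidHom.eqLocus (α ^ ((p:ℕ):ℤ) : G ≃* G).toMonoidHom (MonoidHom.id G) := by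
      rw [Subgroup.closure_le]
      intro g hg
      simp only [Set.mem_insert_iff, Set.mem_singleton_iff] at hg
      rcases hg with rfl|rfl|rfl
      · exact hXp
      · exact hYp
      · exact hzfix _
    refine MulEquiv.ext fun g => ?_
    have hg : g ∈ Subgroup.closure ({x,y,z} : Set G) := by
      rw [hgen]; exact Subgroup.mem_top g
    exact hle hg
  have hαmod : ∀ i j : ℤ, (i : ZMod p) = (j : ZMod p) → ∀ g : G, (α ^ i) g = (α ^ j) g := by
    intro i j h g
    rw [ZMod.intCast_eq_intCast_iff] at h
    obtain ⟨m, hm⟩ := h.dvd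
    have hj : j = i + ((p:ℕ):ℤ) * m := by linarith
    rw [hj, zpow_add, zpow_mul, hα1, one_zpow, mul_one]
  -- congruence for the binomial exponent
  have hccong : ∀ i j : ℤ, (i : ZMod p) = (j : ZMod p) →
      ((i*(i-1)/2 : ℤ) : ZMod p) = ((j*(j-1)/2 : ℤ) : ZMod p) := by
    intro i j h
    have h2 : ((2:ℤ) : ZMod p) ≠ 0 := by exact_mod_cast h2ne
    apply mul_left_cancel₀ h2
    calc ((2:ℤ):ZMod p) * ((i*(i-1)/2 : ℤ) : ZMod p)
        = ((2 * (i*(i-1)/2) : ℤ) : ZMod p) := by push_cast; ring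
      _ = ((i*(i-1) : ℤ) : ZMod p) := by rw [Int.mul_ediv_cancel' (h2dvd i)]
      _ = (i:ZMod p) * ((i:ZMod p)-1) := by push_cast; ring
      _ = (j:ZMod p) * ((j:ZMod p)-1) := by rw [h]
      _ = ((j*(j-1) : ℤ) : ZMod p) := by push_cast; ring
      _ = ((2 * (j*(j-1)/2) : ℤ) : ZMod p) := by rw [Int.mul_ediv_cancel' (h2dvd j)]
      _ = ((2:ℤ):ZMod p) * ((j*(j-1)/2 : ℤ) : ZMod p) := by push_cast; ring
  -- distinctness lemmas
  have hXXc : ∀ i j : ℤ, (α ^ i) x = (α ^ j) x → (i : ZMod p) = (j : ZMod p) := by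
    intro i j h
    rw [hX i, hX j, hkey] at h
    exact h.2.1
  have hYYc : ∀ i j : ℤ, (α ^ i) y = (α ^ j) y → (i : ZMod p) = (j : ZMod p) := by
    intro i j h
    rw [hY i, hY j, hkey] at h
    exact h.2.2
  have hXYne : ∀ i j : ℤ, (α ^ i) x ≠ (α ^ j) y := by
    intro i j h
    rw [hX, hY, hkey] at h
    have h1 := h.1
    push_cast at h1
    exact one_ne_zero h1
  -- backward adjacency
  have hback : ∀ u v : G,
      (∃ m : ℤ, (u = (α ^ m) x ∨ u = (α ^ m) y) ∧ v = (α ^ (m + 1)) x) →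
      cayAdj G S u v := by
    rintro u v ⟨m, hm, rfl⟩
    show (α ^ (m+1)) x * u⁻¹ ∈ S
    rcases hm with rfl | rfl
    · have he : (α ^ (m+1)) x * ((α ^ m) x)⁻¹ = (α ^ m) y := by
        rw [hX (m+1), hX m, hY m, hTmulinv,
          show ((1:ℤ)-1) = 0 from by norm_num,
          show (m+1-m : ℤ) = 1 from by ring,
          show ((m+1)*(m+1-1)/2 - m*(m-1)/2 : ℤ) = m from by linarith [hcstep m]]
      rw [he, hS]
      exact ⟨m, Or.inr rfl⟩
    · have he : (α ^ (m+1)) x * ((α ^ m) y)⁻¹ = (α ^ m) x := by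
        rw [hX (m+1), hY m, hX m, hTmulinv,
          show ((m+1)*(m+1-1)/2 - m : ℤ) = m*(m-1)/2 from by linarith [hcstep m],
          show ((1:ℤ)-0) = 1 from by norm_num,
          show (m+1-1 : ℤ) = m from by ring]
      rw [he, hS]
      exact ⟨m, Or.inl rfl⟩
  -- the characterization of arcs
  have hchar : ∀ u ∈ S, ∀ v ∈ S, (cayAdj G S u v ↔
      ∃ i : ℤ, (u = (α ^ i) x ∨ u = (α ^ i) y) ∧ v = (α ^ (i + 1)) x) := by
    intro u hu v hv
    constructor
    · intro hadj
      simp only [hS, Set.mem_setOf_eq] at hu hv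
      obtain ⟨i, hui⟩ := hu
      obtain ⟨j, hvj⟩ := hv
      have hadj' : v * u⁻¹ ∈ S := hadj
      simp only [hS, Set.mem_setOf_eq] at hadj'
      obtain ⟨k, hk⟩ := hadj'
      rcases hui with rfl | rfl <;> rcases hvj with rfl | rfl
      · -- u = α^i x, v = α^j x
        simp only [hX, hY, hTmulinv] at hk
        rcases hk with hk | hk <;> rw [hkey] at hk
        · exact absurd (show (1:ZMod p) = 0 from by
            have h1 := hk.1; push_cast at h1; linear_combination -h1) one_ne_zero
        · have h2 := hk.2.1
          refine ⟨i, Or.inl rfl, ?_⟩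
          exact hαmod j (i+1) (by push_cast at h2 ⊢; linear_combination h2) x
      · -- u = α^i x, v = α^j y
        simp only [hX, hY, hTmulinv] at hk
        rcases hk with hk | hk <;> rw [hkey] at hk
        · exact absurd (show (2:ZMod p) = 0 from by
            have h1 := hk.1; push_cast at h1; linear_combination -h1) h2ne
        · exact absurd (show (1:ZMod p) = 0 from by
            have h1 := hk.1; push_cast at h1; linear_combination -h1) one_ne_zero
      · -- u = α^i y, v = α^j x
        simp only [hX, hY, hTmulinv] at hk
        rcases hk with hk | hk <;> rw [hkey] at hk
        · obtain ⟨h1, h2, h3⟩ := hk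
          have h4 := hccong k (j-1) (by push_cast at h2 ⊢; linear_combination -h2)
          have h5 : (((j-1)*(j-1-1)/2 : ℤ) : ZMod p) =
              ((j*(j-1)/2 : ℤ) : ZMod p) - ((j:ZMod p) - 1) := by
            rw [hcstep2 j]; push_cast; ring
          refine ⟨i, Or.inr rfl, ?_⟩
          refine hαmod j (i+1) ?_ x
          push_cast at h3 ⊢
          linear_combination h3 + h4 + h5
        · exact absurd (show (1:ZMod p) = 0 from by
            have h1 := hk.1; push_cast at h1; linear_combination h1) one_ne_zero
      · -- u = α^i y, v = α^j y
        simp only [hX, hY, hTmulinv] at hk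
        rcases hk with hk | hk <;> rw [hkey] at hk
        · exact absurd (show (1:ZMod p) = 0 from by
            have h1 := hk.1; push_cast at h1; linear_combination -h1) one_ne_zero
        · exact absurd (show (1:ZMod p) = 0 from by
            have h2 := hk.2.1; push_cast at h2; linear_combination -h2) one_ne_zero
    · exact hback u v
  -- val cast lemma
  have hval : ∀ a : ZMod p, (((a.val : ℕ) : ℤ) : ZMod p) = a := by
    intro a; push_cast; simp
  -- counting S
  have hg1inj : Function.Injective
      (Sum.elim (fun a : ZMod p => (α ^ ((a.val : ℕ):ℤ)) x)
        (fun a : ZMod p => (α ^ ((a.val : ℕ):ℤ)) y)) := by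
    rintro (a|a) (b|b) h <;> simp only [Sum.elim_inl, Sum.elim_inr] at h
    · have h1 := hXXc _ _ h
      rw [hval a, hval b] at h1
      rw [h1]
    · exact absurd h (hXYne _ _)
    · exact absurd h.symm (hXYne _ _)
    · have h1 := hYYc _ _ h
      rw [hval a, hval b] at h1
      rw [h1]
  have hSr : S = Set.range (Sum.elim (fun a : ZMod p => (α ^ ((a.val : ℕ):ℤ)) x)
        (fun a : ZMod p => (α ^ ((a.val : ℕ):ℤ)) y)) := by
    ext u
    simp only [hS, Set.mem_setOf_eq, Set.mem_range]
    constructor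
    · rintro ⟨i, rfl | rfl⟩
      · exact ⟨Sum.inl (i : ZMod p), hαmod _ i (hval _) x⟩
      · exact ⟨Sum.inr (i : ZMod p), hαmod _ i (hval _) y⟩
    · rintro ⟨(a|a), rfl⟩
      · exact ⟨((a.val : ℕ):ℤ), Or.inl rfl⟩
      · exact ⟨((a.val : ℕ):ℤ), Or.inr rfl⟩
  have hcount1 : S.ncard = 2 * p := by
    rw [hSr, ← Set.image_univ, Set.ncard_image_of_injective _ hg1inj, Set.ncard_univ,
      Nat.card_sum]
    simp [Nat.card_zmod]
    ring
  -- counting arcs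
  have hg2inj : Function.Injective
      (Sum.elim (fun a : ZMod p => ((α ^ ((a.val : ℕ):ℤ)) x, (α ^ (((a.val : ℕ):ℤ)+1)) x))
        (fun a : ZMod p => ((α ^ ((a.val : ℕ):ℤ)) y, (α ^ (((a.val : ℕ):ℤ)+1)) x))) := by
    rintro (a|a) (b|b) h <;>
      simp only [Sum.elim_inl, Sum.elim_inr, Prod.mk.injEq] at h
    · have h1 := hXXc _ _ h.1
      rw [hval a, hval b] at h1
      rw [h1]
    · exact absurd h.1 (hXYne _ _)
    · exact absurd h.1.symm (hXYne _ _)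
    · have h1 := hYYc _ _ h.1
      rw [hval a, hval b] at h1
      rw [h1]
  have hAr : {q : G × G | q.1 ∈ S ∧ q.2 ∈ S ∧ cayAdj G S q.1 q.2} =
      Set.range (Sum.elim (fun a : ZMod p => ((α ^ ((a.val : ℕ):ℤ)) x, (α ^ (((a.val : ℕ):ℤ)+1)) x))
        (fun a : ZMod p => ((α ^ ((a.val : ℕ):ℤ)) y, (α ^ (((a.val : ℕ):ℤ)+1)) x))) := by
    ext q
    simp only [Set.mem_setOf_eq, Set.mem_range]
    constructor
    · rintro ⟨h1, h2, h3⟩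
      obtain ⟨m, hm, hv⟩ := (hchar q.1 h1 q.2 h2).mp h3
      have hcm : ((((m:ZMod p).val : ℕ):ℤ) : ZMod p) = (m : ZMod p) := hval _
      have hcm1 : (((((m:ZMod p).val : ℕ):ℤ) + 1 : ℤ) : ZMod p) = ((m + 1 : ℤ) : ZMod p) := by
        push_cast at hcm ⊢
        rw [hcm]
      rcases hm with hm | hm
      · refine ⟨Sum.inl (m : ZMod p), ?_⟩
        simp only [Sum.elim_inl]
        refine Prod.ext ?_ ?_
        · exact (hαmod _ m hcm x).trans hm.symm
        · exact (hαmod _ (m+1) hcm1 x).trans hv.symm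
      · refine ⟨Sum.inr (m : ZMod p), ?_⟩
        simp only [Sum.elim_inr]
        refine Prod.ext ?_ ?_
        · exact (hαmod _ m hcm y).trans hm.symm
        · exact (hαmod _ (m+1) hcm1 x).trans hv.symm
    · rintro ⟨(a|a), rfl⟩
      · refine ⟨?_, ?_, ?_⟩
        · rw [hS]; exact ⟨((a.val : ℕ):ℤ), Or.inl rfl⟩
        · rw [hS]; exact ⟨((a.val : ℕ):ℤ)+1, Or.inl rfl⟩
        · exact hback _ _ ⟨((a.val : ℕ):ℤ), Or.inl rfl, rfl⟩
      · refine ⟨?_, ?_, ?_⟩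
        · rw [hS]; exact ⟨((a.val : ℕ):ℤ), Or.inr rfl⟩
        · rw [hS]; exact ⟨((a.val : ℕ):ℤ)+1, Or.inl rfl⟩
        · exact hback _ _ ⟨((a.val : ℕ):ℤ), Or.inr rfl, rfl⟩
  have hcount2 : {q : G × G | q.1 ∈ S ∧ q.2 ∈ S ∧ cayAdj G S q.1 q.2}.ncard = 2 * p := by
    rw [hAr, ← Set.image_univ, Set.ncard_image_of_injective _ hg2inj, Set.ncard_univ,
      Nat.card_sum]
    simp [Nat.card_zmod]
    ring
  exact ⟨hcount1, hcount2, hchar⟩
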